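/- arXiv:1609.08212 — 4 statements merged into one kernel-verified Lean document; each statement's English description precedes it below -/
import Mathlib

section
/- Let H be a connected linear hypergraph and let X, Y be two disjoint nonempty sets of vertices of H. Then H contains a linear path with one endpoint in X and one endpoint in Y. -/
/-- The shadow graph of a hypergraph: two vertices are adjacent if they lie
together in some hyperedge. -/
def shadowGraph {V : Type*} (E : Finset (Finset V)) : SimpleGraph V where
  Adj u v := u ≠ v ∧ ∃ e ∈ E, u ∈ e ∧ v ∈ e
  symm := by
    constructor
    intro u v ⟨huv, e, he, hu, hv⟩
    exact ⟨huv.symm, e, he, hv, hu⟩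
  loopless := by constructor; intro v ⟨h, _⟩; exact h rfl

/-- A linear path of length ℓ in a hypergraph with edge set E: edges
e 0, ..., e (ℓ-1), consecutive ones meeting in exactly one vertex,
non-consecutive ones disjoint. -/
def IsLinearPath {V : Type*} [DecidableEq V] (E : Finset (Finset V))
    (ℓ : ℕ) (e : ℕ → Finset V) : Prop :=
  (∀ i < ℓ, e i ∈ E) ∧
  (∀ i j, i < j → j < ℓ → e i ≠ e j) ∧
  (∀ i, i + 1 < ℓ → (e i ∩ e (i + 1)).card = 1) ∧
  (∀ i j, i + 2 ≤ j → j < ℓ → e i ∩ e j = ∅)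

/-- A connected linear hypergraph contains a linear path with one
endpoint in X and one endpoint in Y, for any disjoint nonempty vertex sets X, Y. -/
theorem stmt_5 {V : Type*} [Fintype V] [DecidableEq V] (E : Finset (Finset V))
    (hlin : ∀ e ∈ E, ∀ f ∈ E, e ≠ f → (e ∩ f).card ≤ 1)
    (hconn : (shadowGraph E).Connected)
    (X Y : Finset V) (hXY : Disjoint X Y) (hX : X.Nonempty) (hY : Y.Nonempty) :
    ∃ (ℓ : ℕ) (e : ℕ → Finset V), 1 ≤ ℓ ∧ IsLinearPath E ℓ e ∧
      (∃ x ∈ X, x ∈ e 0 ∧ ∀ i, 1 ≤ i → i < ℓ → x ∉ e i) ∧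
      (∃ y ∈ Y, y ∈ e (ℓ - 1) ∧ ∀ i, i < ℓ - 1 → y ∉ e i) := by
  classical
  obtain ⟨x, hx⟩ := hX
  obtain ⟨y, hy⟩ := hY
  set G := shadowGraph E with hG
  have hxy : x ≠ y := fun h => Finset.disjoint_left.mp hXY hx (h ▸ hy)
  obtain ⟨p, hp⟩ := hconn.exists_walk_length_eq_dist x y
  set ℓ := p.length with hℓ
  have hℓ1 : 1 ≤ ℓ := by
    have := hconn.pos_dist_of_ne hxy
    omega
  -- choose a hyperedge for each step of the walk
  have hadj : ∀ i, i < ℓ → ∃ g ∈ E, p.getVert i ∈ g ∧ p.getVert (i + 1) ∈ g := by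
    intro i hi
    exact (p.adj_getVert_succ hi).2
  choose! f hfE hf1 hf2 using hadj
  -- two vertices in a common hyperedge are at distance ≤ 1
  have hmem2 : ∀ (u v : V) (g : Finset V), g ∈ E → u ∈ g → v ∈ g → G.dist u v ≤ 1 := by
    intro u v g hg hu hv
    by_cases h : u = v
    · simp [h, SimpleGraph.dist_self]
    · have hadj' : G.Adj u v := ⟨h, g, hg, hu, hv⟩
      have := SimpleGraph.dist_le hadj'.toWalk
      simpa using this
  -- upper bound on distance along the walk
  have Lup : ∀ j, j ≤ ℓ → ∀ i, i ≤ j → G.dist (p.getVert i) (p.getVert j) ≤ j - i := by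
    intro j
    induction j with
    | zero => intro _ i hi; interval_cases i; simp
    | succ j ih =>
      intro hjl i hi
      rcases Nat.eq_or_lt_of_le hi with h | h
      · subst h; simp
      · have hij : i ≤ j := by omega
        have h1 := ih (by omega) i hij
        have h2 : G.dist (p.getVert j) (p.getVert (j + 1)) ≤ 1 := by
          have hadj' := p.adj_getVert_succ (by omega : j < p.length)
          have := SimpleGraph.dist_le hadj'.toWalk
          simpa using this
        have := hconn.dist_triangle (u := p.getVert i) (v := p.getVert j)
          (w := p.getVert (j + 1))
        omega
  -- lower bound on distance along a shortest walk
  have Llow : ∀ i j, i ≤ j → j ≤ ℓ → j - i ≤ G.dist (p.getVert i) (p.getVert j) := by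
    intro i j hij hjl
    have h1 : G.dist x (p.getVert i) ≤ i := by
      have := Lup i (by omega) 0 (by omega)
      simpa using this
    have h2 : G.dist (p.getVert j) y ≤ ℓ - j := by
      have h0 := Lup ℓ le_rfl j hjl
      have hgy : p.getVert ℓ = y := p.getVert_length
      rw [hgy] at h0
      exact h0
    have t1 := hconn.dist_triangle (u := x) (v := p.getVert i) (w := p.getVert j)
    have t2 := hconn.dist_triangle (u := x) (v := p.getVert j) (w := y)
    have hdxy : G.dist x y = ℓ := hp.symm
    omega
  -- far-apart edges are disjoint
  have hfar : ∀ i j, i + 2 ≤ j → j < ℓ → f i ∩ f j = ∅ := by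
    intro i j hij hj
    rw [← Finset.not_nonempty_iff_eq_empty]
    rintro ⟨w, hw⟩
    rw [Finset.mem_inter] at hw
    have d1 : G.dist (p.getVert i) w ≤ 1 := hmem2 _ _ _ (hfE i (by omega)) (hf1 i (by omega)) hw.1
    have d2 : G.dist w (p.getVert (j + 1)) ≤ 1 := hmem2 _ _ _ (hfE j hj) hw.2 (hf2 j hj)
    have t := hconn.dist_triangle (u := p.getVert i) (v := w) (w := p.getVert (j + 1))
    have low := Llow i (j + 1) (by omega) (by omega)
    omega
  -- all edges distinct
  have hne : ∀ i j, i < j → j < ℓ → f i ≠ f j := by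
    intro i j hij hj heq
    have h1 : p.getVert i ∈ f i := hf1 i (by omega)
    have h2 : p.getVert (j + 1) ∈ f i := heq ▸ hf2 j hj
    have d : G.dist (p.getVert i) (p.getVert (j + 1)) ≤ 1 :=
      hmem2 _ _ _ (hfE i (by omega)) h1 h2
    have low := Llow i (j + 1) (by omega) (by omega)
    omega
  refine ⟨ℓ, f, hℓ1, ⟨fun i hi => hfE i hi, hne, ?_, hfar⟩, ?_, ?_⟩
  · -- consecutive edges meet in exactly one vertex
    intro i hi
    have hle : (f i ∩ f (i + 1)).card ≤ 1 :=
      hlin _ (hfE i (by omega)) _ (hfE (i + 1) hi) (hne i (i + 1) (by omega) hi)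
    have hpos : 0 < (f i ∩ f (i + 1)).card := by
      apply Finset.card_pos.mpr
      exact ⟨p.getVert (i + 1), Finset.mem_inter.mpr ⟨hf2 i (by omega), hf1 (i + 1) hi⟩⟩
    omega
  · -- x endpoint
    refine ⟨x, hx, ?_, ?_⟩
    · have := hf1 0 (by omega)
      simpa using this
    · intro i h1i hiℓ hxi
      have d : G.dist x (p.getVert (i + 1)) ≤ 1 := hmem2 _ _ _ (hfE i hiℓ) hxi (hf2 i hiℓ)
      have low := Llow 0 (i + 1) (by omega) (by omega)
      simp only [SimpleGraph.Walk.getVert_zero] at low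
      omega
  · -- y endpoint
    refine ⟨y, hy, ?_, ?_⟩
    · have := hf2 (ℓ - 1) (by omega)
      have heq : ℓ - 1 + 1 = ℓ := by omega
      rw [heq] at this
      rwa [p.getVert_length] at this
    · intro i hi hyi
      have d : G.dist (p.getVert i) y ≤ 1 := hmem2 _ _ _ (hfE i (by omega)) (hf1 i (by omega)) hyi
      have low := Llow i ℓ (by omega) le_rfl
      rw [p.getVert_length] at low
      omega
end

section
/- Let H be a linear 3-partite 3-uniform hypergraph with 3-partition (V_1, V_2, V_3) and average degree at least 3p/2. Then there exists a vertex u in V_1 such that for each ℓ ∈ {1,...,p}, the shadow of H contains an extendable path of length ℓ from u to some vertex of V_2. -/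
lemma anatomy {V : Type*} [DecidableEq V] {V₁ V₂ V₃ : Finset V}
    (hd12 : Disjoint V₁ V₂) (hd13 : Disjoint V₁ V₃) (hd23 : Disjoint V₂ V₃)
    {e : Finset V} (hc : e.card = 3)
    (h1 : (e ∩ V₁).card = 1) (h2 : (e ∩ V₂).card = 1) (h3 : (e ∩ V₃).card = 1) :
    ∃ a b c, a ∈ V₁ ∧ b ∈ V₂ ∧ c ∈ V₃ ∧ a ∈ e ∧ b ∈ e ∧ c ∈ e ∧
      (∀ x ∈ e, x ∈ V₁ → x = a) ∧ (∀ x ∈ e, x ∈ V₂ → x = b) ∧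
      (∀ x ∈ e, x ∈ V₃ → x = c) ∧ (∀ x ∈ e, x = a ∨ x = b ∨ x = c) := by
  obtain ⟨a, ha⟩ := Finset.card_eq_one.mp h1
  obtain ⟨b, hb⟩ := Finset.card_eq_one.mp h2
  obtain ⟨c, hc3⟩ := Finset.card_eq_one.mp h3
  have haV : a ∈ V₁ := (Finset.mem_inter.mp (ha ▸ Finset.mem_singleton_self a)).2
  have hae : a ∈ e := (Finset.mem_inter.mp (ha ▸ Finset.mem_singleton_self a)).1
  have hbV : b ∈ V₂ := (Finset.mem_inter.mp (hb ▸ Finset.mem_singleton_self b)).2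
  have hbe : b ∈ e := (Finset.mem_inter.mp (hb ▸ Finset.mem_singleton_self b)).1
  have hcV : c ∈ V₃ := (Finset.mem_inter.mp (hc3 ▸ Finset.mem_singleton_self c)).2
  have hce : c ∈ e := (Finset.mem_inter.mp (hc3 ▸ Finset.mem_singleton_self c)).1
  have hab : a ≠ b := fun h => Finset.disjoint_left.mp hd12 haV (h ▸ hbV)
  have hac : a ≠ c := fun h => Finset.disjoint_left.mp hd13 haV (h ▸ hcV)
  have hbc : b ≠ c := fun h => Finset.disjoint_left.mp hd23 hbV (h ▸ hcV)
  have hsub : ({a, b, c} : Finset V) ⊆ e := by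
    intro x hx
    simp only [Finset.mem_insert, Finset.mem_singleton] at hx
    rcases hx with rfl | rfl | rfl <;> assumption
  have hcard : ({a, b, c} : Finset V).card = 3 := by
    rw [Finset.card_insert_of_notMem (by simp [hab, hac]),
      Finset.card_insert_of_notMem (by simp [hbc]), Finset.card_singleton]
  have heq : ({a, b, c} : Finset V) = e :=
    Finset.eq_of_subset_of_card_le hsub (by omega)
  refine ⟨a, b, c, haV, hbV, hcV, hae, hbe, hce, ?_, ?_, ?_, ?_⟩
  · intro x hx hxV
    have : x ∈ e ∩ V₁ := Finset.mem_inter.mpr ⟨hx, hxV⟩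
    rw [ha, Finset.mem_singleton] at this; exact this
  · intro x hx hxV
    have : x ∈ e ∩ V₂ := Finset.mem_inter.mpr ⟨hx, hxV⟩
    rw [hb, Finset.mem_singleton] at this; exact this
  · intro x hx hxV
    have : x ∈ e ∩ V₃ := Finset.mem_inter.mpr ⟨hx, hxV⟩
    rw [hc3, Finset.mem_singleton] at this; exact this
  · intro x hx
    rw [← heq] at hx
    simpa using hx

lemma path_distinct {V : Type*} [DecidableEq V] {V₁ V₃ : Finset V}
    (hd13 : Disjoint V₁ V₃)
    {m : ℕ} {v : ℕ → V} {f : ℕ → Finset V}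
    (hparts : ∀ j ≤ m, (j % 2 = 0 → v j ∈ V₁) ∧ (j % 2 = 1 → v j ∈ V₃))
    (hedges : ∀ j < m, v j ∈ f j ∧ v (j+1) ∈ f j)
    (hsep : ∀ j k, j < m → k ≤ m → k ≠ j → k ≠ j + 1 → v k ∉ f j) :
    ∀ j k, j < k → k ≤ m → v j ≠ v k := by
  intro j k hjk hkm
  rcases eq_or_lt_of_le (Nat.succ_le_of_lt hjk) with heq | hlt
  · -- k = j + 1 : different parts
    have hj := hparts j (by omega)
    have hk := hparts k (by omega)
    intro hveq
    rcases Nat.mod_two_eq_zero_or_one j with hpar | hpar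
    · have h1 : v j ∈ V₁ := hj.1 hpar
      have h2 : v k ∈ V₃ := hk.2 (by omega)
      exact Finset.disjoint_left.mp hd13 h1 (hveq ▸ h2)
    · have h1 : v j ∈ V₃ := hj.2 hpar
      have h2 : v k ∈ V₁ := hk.1 (by omega)
      exact Finset.disjoint_left.mp hd13 h2 (hveq ▸ h1)
  · -- j + 1 < k
    intro hveq
    have h1 : v k ∈ f (k - 1) := by
      have h := (hedges (k - 1) (by omega)).2
      have hk1 : k - 1 + 1 = k := by omega
      rwa [hk1] at h
    have h2 : v j ∉ f (k - 1) :=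
      hsep (k - 1) j (by omega) (by omega) (by omega) (by omega)
    exact h2 (hveq ▸ h1)



set_option maxHeartbeats 1000000 in
lemma prefix_path {V : Type*} [DecidableEq V]
    (E : Finset (Finset V)) (hU : ∀ e ∈ E, e.card = 3)
    (hlin : ∀ e ∈ E, ∀ f ∈ E, e ≠ f → (e ∩ f).card ≤ 1)
    (V₁ V₂ V₃ : Finset V)
    (hpart : ∀ e ∈ E, (e ∩ V₁).card = 1 ∧ (e ∩ V₂).card = 1 ∧ (e ∩ V₃).card = 1)
    (hd12 : Disjoint V₁ V₂) (hd13 : Disjoint V₁ V₃) (hd23 : Disjoint V₂ V₃)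
    (p : ℕ) (W' : Finset V) (E'' : Finset (Finset V)) (hE''E : E'' ⊆ E)
    (hsub : ∀ e ∈ E'', e ⊆ W')
    (hmin : ∀ x ∈ W', p + 1 ≤ 2 * (E''.filter (fun e => x ∈ e)).card)
    (u : V) (huW : u ∈ W') (huV₁ : u ∈ V₁) :
    ∀ m, m + 1 ≤ p → ∃ (v : ℕ → V) (f : ℕ → Finset V),
      v 0 = u ∧
      (∀ j ≤ m, v j ∈ W') ∧
      (∀ j ≤ m, (j % 2 = 0 → v j ∈ V₁) ∧ (j % 2 = 1 → v j ∈ V₃)) ∧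
      (∀ j < m, f j ∈ E'' ∧ v j ∈ f j ∧ v (j + 1) ∈ f j) ∧
      (∀ j k, j < m → k ≤ m → k ≠ j → k ≠ j + 1 → v k ∉ f j) := by
  intro m
  induction m with
  | zero =>
      intro _
      refine ⟨fun _ => u, fun _ => ∅, rfl, ?_, ?_, ?_, ?_⟩
      · intro j hj; exact huW
      · intro j hj
        have hj0 : j = 0 := by omega
        subst hj0
        exact ⟨fun _ => huV₁, fun h => absurd h (by omega)⟩
      · intro j hj; exact absurd hj (Nat.not_lt_zero j)
      · intro j k hj; exact absurd hj (Nat.not_lt_zero j)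
  | succ m ih =>
      intro hmp
      obtain ⟨v, f, h0, hW, hparts, hedges, hsep⟩ := ih (by omega)
      have hdist : ∀ j k, j < k → k ≤ m → v j ≠ v k :=
        path_distinct hd13 hparts (fun j hj => ⟨(hedges j hj).2.1, (hedges j hj).2.2⟩) hsep
      set D := E''.filter (fun e => v m ∈ e) with hD
      have hDcard : p + 1 ≤ 2 * D.card := hmin (v m) (hW m le_rfl)
      set S := (Finset.range m).filter (fun k => k % 2 ≠ m % 2) with hS
      have hScard : S.card ≤ (m + 1) / 2 := by
        have hmaps : ∀ k ∈ S, k / 2 ∈ Finset.range ((m + 1) / 2) := by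
          intro k hk
          simp only [hS, Finset.mem_filter, Finset.mem_range] at hk ⊢
          omega
        have hinj : Set.InjOn (fun k => k / 2) S := by
          intro k1 h1 k2 h2 hkk
          simp only [hS, Finset.coe_filter, Finset.mem_range, Set.mem_setOf_eq] at h1 h2
          simp only at hkk
          omega
        have h := Finset.card_le_card_of_injOn (fun k => k / 2) hmaps hinj
        simpa using h
      have hBadsub : (D.filter (fun e => ∃ k, k < m ∧ v k ∈ e)) ⊆
          S.biUnion (fun k => D.filter (fun e => v k ∈ e)) := by
        intro e he
        obtain ⟨heD, k, hkm, hke⟩ := Finset.mem_filter.mp he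
        have hvme : v m ∈ e := (Finset.mem_filter.mp heD).2
        have heE : e ∈ E := hE''E (Finset.mem_filter.mp heD).1
        have hkpar : k % 2 ≠ m % 2 := by
          intro hpar
          apply hdist k m hkm le_rfl
          rcases Nat.mod_two_eq_zero_or_one k with h | h
          · have hk1 : v k ∈ e ∩ V₁ := Finset.mem_inter.mpr ⟨hke, (hparts k (by omega)).1 h⟩
            have hm1 : v m ∈ e ∩ V₁ :=
              Finset.mem_inter.mpr ⟨hvme, (hparts m le_rfl).1 (by omega)⟩
            exact Finset.card_le_one.mp (le_of_eq (hpart e heE).1) _ hk1 _ hm1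
          · have hk1 : v k ∈ e ∩ V₃ := Finset.mem_inter.mpr ⟨hke, (hparts k (by omega)).2 h⟩
            have hm1 : v m ∈ e ∩ V₃ :=
              Finset.mem_inter.mpr ⟨hvme, (hparts m le_rfl).2 (by omega)⟩
            exact Finset.card_le_one.mp (le_of_eq (hpart e heE).2.2) _ hk1 _ hm1
        exact Finset.mem_biUnion.mpr ⟨k, by simp [hS, Finset.mem_range, hkm, hkpar],
          Finset.mem_filter.mpr ⟨heD, hke⟩⟩
      have hone : ∀ k ∈ S, (D.filter (fun e => v k ∈ e)).card ≤ 1 := by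
        intro k hk
        have hkm : k < m := Finset.mem_range.mp (Finset.mem_filter.mp hk).1
        rw [Finset.card_le_one]
        intro e1 he1 e2 he2
        simp only [hD, Finset.mem_filter] at he1 he2
        by_contra hne
        have hlin' := hlin e1 (hE''E he1.1.1) e2 (hE''E he2.1.1) hne
        have hne' : v k ≠ v m := hdist k m hkm le_rfl
        have hsub2 : ({v k, v m} : Finset V) ⊆ e1 ∩ e2 := by
          intro x hx
          simp only [Finset.mem_insert, Finset.mem_singleton] at hx
          rcases hx with rfl | rfl <;>
            exact Finset.mem_inter.mpr ⟨by tauto, by tauto⟩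
        have h2 : 2 ≤ (e1 ∩ e2).card := by
          calc 2 = ({v k, v m} : Finset V).card := (Finset.card_pair hne').symm
            _ ≤ _ := Finset.card_le_card hsub2
        omega
      have hBadcard : (D.filter (fun e => ∃ k, k < m ∧ v k ∈ e)).card < D.card := by
        have h1 := Finset.card_le_card hBadsub
        have h2 := Finset.card_biUnion_le (s := S) (t := fun k => D.filter (fun e => v k ∈ e))
        have h3 : ∑ k ∈ S, (D.filter (fun e => v k ∈ e)).card ≤ S.card := by
          calc ∑ k ∈ S, (D.filter (fun e => v k ∈ e)).card ≤ ∑ _k ∈ S, 1 :=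
              Finset.sum_le_sum hone
            _ = S.card := by simp
        omega
      have hgood : (D \ D.filter (fun e => ∃ k, k < m ∧ v k ∈ e)).Nonempty := by
        rw [← Finset.card_pos, Finset.card_sdiff_of_subset (Finset.filter_subset _ _)]
        omega
      obtain ⟨e, he⟩ := hgood
      obtain ⟨heD, heBad⟩ := Finset.mem_sdiff.mp he
      have heE'' : e ∈ E'' := (Finset.mem_filter.mp heD).1
      have hvme : v m ∈ e := (Finset.mem_filter.mp heD).2
      have heE : e ∈ E := hE''E heE''
      have hnotold : ∀ k, k < m → v k ∉ e := by
        intro k hkm hke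
        exact heBad (Finset.mem_filter.mpr ⟨heD, k, hkm, hke⟩)
      obtain ⟨a, b, c, haV, hbV, hcV, hae, hbe, hce, hua, hub, huc, hall⟩ :=
        anatomy hd12 hd13 hd23 (hU e heE) (hpart e heE).1 (hpart e heE).2.1 (hpart e heE).2.2
      set w := if m % 2 = 0 then c else a with hw
      have hwe : w ∈ e := by rw [hw]; split <;> assumption
      have hwW : w ∈ W' := hsub e heE'' hwe
      have hwnotv : ∀ k, k ≤ m → w ≠ v k := by
        intro k hkm heq
        rcases eq_or_lt_of_le hkm with rfl | hlt
        · rcases Nat.mod_two_eq_zero_or_one k with h | h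
          · have h1 : v k ∈ V₁ := (hparts k le_rfl).1 h
            have h2 : w ∈ V₃ := by rw [hw, if_pos h]; exact hcV
            exact Finset.disjoint_left.mp hd13 h1 (heq ▸ h2)
          · have h1 : v k ∈ V₃ := (hparts k le_rfl).2 h
            have h2 : w ∈ V₁ := by rw [hw, if_neg (by omega)]; exact haV
            exact Finset.disjoint_left.mp hd13 (heq ▸ h2) h1
        · exact hnotold k hlt (heq ▸ hwe)
      have hwnotf : ∀ j, j < m → w ∉ f j := by
        intro j hjm hwf
        have hFE'' := (hedges j hjm).1
        have hFE : f j ∈ E := hE''E hFE''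
        have hvjf := (hedges j hjm).2.1
        have hvj1f := (hedges j hjm).2.2
        rcases Nat.mod_two_eq_zero_or_one m with hm | hm
        · have hwV : w ∈ V₃ := by rw [hw, if_pos hm]; exact hcV
          rcases Nat.mod_two_eq_zero_or_one j with hj | hj
          · have hvt : v (j + 1) ∈ V₃ := (hparts (j + 1) (by omega)).2 (by omega)
            have heq : w = v (j + 1) :=
              Finset.card_le_one.mp (le_of_eq (hpart _ hFE).2.2) _
                (Finset.mem_inter.mpr ⟨hwf, hwV⟩) _ (Finset.mem_inter.mpr ⟨hvj1f, hvt⟩)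
            exact hwnotv (j + 1) (by omega) heq
          · have hvt : v j ∈ V₃ := (hparts j (by omega)).2 hj
            have heq : w = v j :=
              Finset.card_le_one.mp (le_of_eq (hpart _ hFE).2.2) _
                (Finset.mem_inter.mpr ⟨hwf, hwV⟩) _ (Finset.mem_inter.mpr ⟨hvjf, hvt⟩)
            exact hwnotv j (by omega) heq
        · have hwV : w ∈ V₁ := by rw [hw, if_neg (by omega)]; exact haV
          rcases Nat.mod_two_eq_zero_or_one j with hj | hj
          · have hvt : v j ∈ V₁ := (hparts j (by omega)).1 hj
            have heq : w = v j :=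
              Finset.card_le_one.mp (le_of_eq (hpart _ hFE).1) _
                (Finset.mem_inter.mpr ⟨hwf, hwV⟩) _ (Finset.mem_inter.mpr ⟨hvjf, hvt⟩)
            exact hwnotv j (by omega) heq
          · have hvt : v (j + 1) ∈ V₁ := (hparts (j + 1) (by omega)).1 (by omega)
            have heq : w = v (j + 1) :=
              Finset.card_le_one.mp (le_of_eq (hpart _ hFE).1) _
                (Finset.mem_inter.mpr ⟨hwf, hwV⟩) _ (Finset.mem_inter.mpr ⟨hvj1f, hvt⟩)
            exact hwnotv (j + 1) (by omega) heq
      refine ⟨fun j => if j ≤ m then v j else w, fun j => if j < m then f j else e,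
        ?_, ?_, ?_, ?_, ?_⟩
      · simp only [Nat.zero_le, if_pos]; exact h0
      · intro j hj
        by_cases hjm : j ≤ m
        · simp only [if_pos hjm]; exact hW j hjm
        · simp only [if_neg hjm]; exact hwW
      · intro j hj
        by_cases hjm : j ≤ m
        · simp only [if_pos hjm]; exact hparts j hjm
        · have hj1 : j = m + 1 := by omega
          simp only [if_neg hjm]
          subst hj1
          rcases Nat.mod_two_eq_zero_or_one m with h | h
          · exact ⟨fun h2 => absurd h2 (by omega),
              fun _ => by rw [hw, if_pos h]; exact hcV⟩
          · exact ⟨fun _ => by rw [hw, if_neg (by omega)]; exact haV,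
              fun h2 => absurd h2 (by omega)⟩
      · intro j hj
        by_cases hjm : j < m
        · simp only [if_pos hjm, if_pos (le_of_lt hjm), if_pos (Nat.succ_le_of_lt hjm)]
          exact hedges j hjm
        · simp only [if_neg hjm, if_pos (by omega : j ≤ m),
            if_neg (by omega : ¬ (j + 1 ≤ m))]
          rw [show j = m by omega]
          exact ⟨heE'', hvme, hwe⟩
      · intro j k hj hk hkj hkj1
        by_cases hjm : j < m
        · by_cases hkm : k ≤ m
          · simp only [if_pos hjm, if_pos hkm]
            exact hsep j k hjm hkm hkj hkj1
          · have hk1 : k = m + 1 := by omega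
            subst hk1
            simp only [if_pos hjm, if_neg (by omega : ¬ (m + 1 ≤ m))]
            exact hwnotf j hjm
        · have hkm : k ≤ m := by omega
          have hkm' : k < m := by omega
          simp only [if_neg hjm, if_pos hkm]
          exact hnotold k hkm'

lemma prune_aux {V : Type*} [DecidableEq V] (p : ℕ) (hp : 1 ≤ p) :
    ∀ (n : ℕ) (W : Finset V) (E' : Finset (Finset V)), W.card ≤ n →
      (∀ e ∈ E', e ⊆ W) → (∀ e ∈ E', e.card = 3) →
      p * W.card ≤ 2 * E'.card → W.Nonempty →
      ∃ (W' : Finset V) (E'' : Finset (Finset V)),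
        E'' ⊆ E' ∧ E''.Nonempty ∧ (∀ e ∈ E'', e ⊆ W') ∧
        (∀ v ∈ W', p + 1 ≤ 2 * (E''.filter (fun e => v ∈ e)).card) := by
  intro n
  induction n with
  | zero =>
      intro W E' hWn _ _ _ hWne
      rw [Nat.le_zero, Finset.card_eq_zero] at hWn
      simp [hWn] at hWne
  | succ n ih =>
      intro W E' hWn hsub h3 hinv hWne
      by_cases hlow : ∃ v ∈ W, 2 * (E'.filter (fun e => v ∈ e)).card ≤ p
      · obtain ⟨v, hvW, hvdeg⟩ := hlow
        have hEne : E'.Nonempty := by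
          rw [← Finset.card_pos]
          have h1 : 1 ≤ p * W.card := Nat.mul_pos hp (Finset.card_pos.mpr hWne)
          omega
        obtain ⟨e₀, he₀⟩ := hEne
        have hW3 : 3 ≤ W.card := by
          have h := Finset.card_le_card (hsub e₀ he₀)
          rw [h3 e₀ he₀] at h; exact h
        have hsplit : (E'.filter (fun e => v ∈ e)).card
            + (E'.filter (fun e => v ∉ e)).card = E'.card :=
          Finset.card_filter_add_card_filter_not _
        have hcard : (W.erase v).card + 1 = W.card := Finset.card_erase_add_one hvW
        have hmul : p * W.card = p * (W.erase v).card + p := by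
          rw [← hcard]; ring
        have hinv₂ : p * (W.erase v).card ≤ 2 * (E'.filter (fun e => v ∉ e)).card := by
          omega
        obtain ⟨W', E'', h1, h2, h3', h4⟩ := ih (W.erase v) (E'.filter (fun e => v ∉ e))
          (by omega)
          (fun e he => by
            have hmem := Finset.mem_filter.mp he
            intro x hx
            refine Finset.mem_erase.mpr ⟨?_, hsub e hmem.1 hx⟩
            rintro rfl; exact hmem.2 hx)
          (fun e he => h3 e (Finset.filter_subset _ _ he)) hinv₂
          (by
            rw [← Finset.card_pos]; omega)
        exact ⟨W', E'', h1.trans (Finset.filter_subset _ _), h2, h3', h4⟩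
      · push_neg at hlow
        refine ⟨W, E', le_refl _, ?_, hsub, fun v hv => hlow v hv⟩
        obtain ⟨v, hv⟩ := hWne
        have h := hlow v hv
        have : ((E'.filter (fun e => v ∈ e))).Nonempty := by
          rw [← Finset.card_pos]; omega
        obtain ⟨e, he⟩ := this
        exact ⟨e, Finset.filter_subset _ _ he⟩

/-- Let H be a linear 3-partite 3-uniform hypergraph with parts
(V₁, V₂, V₃) and average degree at least 3p/2. Then there is a vertex u ∈ V₁ such
that for every ℓ ∈ {1,...,p} the shadow of H contains an extendable path of length ℓ
from u to a vertex of V₂.  The extendable path of length ℓ is given by vertices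
v 0 = u, v 1, ..., v ℓ (pairwise distinct) together with distinct hyperedges
f 0, ..., f (ℓ-1) with v i, v (i+1) ∈ f i. -/
theorem stmt_6 {V : Type*} [Fintype V] [DecidableEq V] [Nonempty V]
    (E : Finset (Finset V)) (hU : ∀ e ∈ E, e.card = 3)
    (hlin : ∀ e ∈ E, ∀ f ∈ E, e ≠ f → (e ∩ f).card ≤ 1)
    (V₁ V₂ V₃ : Finset V)
    (hpart : ∀ e ∈ E, (e ∩ V₁).card = 1 ∧ (e ∩ V₂).card = 1 ∧ (e ∩ V₃).card = 1)
    (hdisj : Disjoint V₁ V₂ ∧ Disjoint V₁ V₃ ∧ Disjoint V₂ V₃)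
    (hcover : V₁ ∪ V₂ ∪ V₃ = Finset.univ)
    (p : ℕ) (hp : 1 ≤ p)
    (hdeg : (3 * p : ℚ) / 2 * (Fintype.card V : ℚ) ≤ 3 * (E.card : ℚ)) :
    ∃ u ∈ V₁, ∀ ℓ, 1 ≤ ℓ → ℓ ≤ p →
      ∃ (v : ℕ → V) (f : ℕ → Finset V),
        v 0 = u ∧ v ℓ ∈ V₂ ∧
        (∀ i j, i < j → j ≤ ℓ → v i ≠ v j) ∧
        (∀ i j, i < j → j < ℓ → f i ≠ f j) ∧
        (∀ i < ℓ, f i ∈ E ∧ v i ∈ f i ∧ v (i + 1) ∈ f i) := by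
  obtain ⟨hd12, hd13, hd23⟩ := hdisj
  have hnum : p * Fintype.card V ≤ 2 * E.card := by
    have h : (↑(p * Fintype.card V) : ℚ) ≤ (↑(2 * E.card) : ℚ) := by push_cast; linarith
    exact_mod_cast h
  have hWne : (Finset.univ : Finset V).Nonempty := Finset.univ_nonempty
  obtain ⟨W', E'', hE''E, hE''ne, hsub, hmin⟩ :=
    prune_aux p hp (Fintype.card V) Finset.univ E (le_of_eq (Finset.card_univ))
      (fun e _ => Finset.subset_univ e) hU
      (by rw [Finset.card_univ]; exact hnum) hWne
  obtain ⟨e₀, he₀⟩ := hE''ne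
  have he₀E : e₀ ∈ E := hE''E he₀
  obtain ⟨u, b₀, c₀, huV₁, _, _, hue₀, _, _, _, _, _, _⟩ :=
    anatomy hd12 hd13 hd23 (hU e₀ he₀E) (hpart e₀ he₀E).1 (hpart e₀ he₀E).2.1
      (hpart e₀ he₀E).2.2
  have huW : u ∈ W' := hsub e₀ he₀ hue₀
  refine ⟨u, huV₁, ?_⟩
  intro ℓ hℓ1 hℓp
  have hℓ : ℓ = (ℓ - 1) + 1 := by omega
  set m := ℓ - 1 with hm
  obtain ⟨v, f, h0, hW, hparts, hedges, hsep⟩ :=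
    prefix_path E hU hlin V₁ V₂ V₃ hpart hd12 hd13 hd23 p W' E'' hE''E hsub hmin
      u huW huV₁ m (by omega)
  have hdist : ∀ j k, j < k → k ≤ m → v j ≠ v k :=
    path_distinct hd13 hparts (fun j hj => ⟨(hedges j hj).2.1, (hedges j hj).2.2⟩) hsep
  set D := E''.filter (fun e => v m ∈ e) with hD
  have hDc : p + 1 ≤ 2 * D.card := hmin (v m) (hW m le_rfl)
  have hfinal : ∃ e ∈ E'', v m ∈ e ∧ (1 ≤ m → e ≠ f (m - 1)) := by
    by_cases hm1 : 1 ≤ m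
    · have hc2 : 2 ≤ D.card := by omega
      have hne : (D \ {f (m - 1)}).Nonempty := by
        rw [← Finset.card_pos]
        have h := Finset.le_card_sdiff ({f (m - 1)} : Finset (Finset V)) D
        simp only [Finset.card_singleton] at h
        omega
      obtain ⟨e, he⟩ := hne
      obtain ⟨heD, hef⟩ := Finset.mem_sdiff.mp he
      simp only [Finset.mem_singleton] at hef
      exact ⟨e, (Finset.mem_filter.mp heD).1, (Finset.mem_filter.mp heD).2, fun _ => hef⟩
    · have hne : D.Nonempty := by rw [← Finset.card_pos]; omega
      obtain ⟨e, heD⟩ := hne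
      exact ⟨e, (Finset.mem_filter.mp heD).1, (Finset.mem_filter.mp heD).2,
        fun h => absurd h hm1⟩
  obtain ⟨e, heE'', hvme, hefm⟩ := hfinal
  have heE : e ∈ E := hE''E heE''
  obtain ⟨a, z, c, haV, hzV, hcV, hae, hze, hce, _, _, _, _⟩ :=
    anatomy hd12 hd13 hd23 (hU e heE) (hpart e heE).1 (hpart e heE).2.1 (hpart e heE).2.2
  have hnotV₂ : ∀ k, k ≤ m → v k ∉ V₂ := by
    intro k hk hkV₂
    rcases Nat.mod_two_eq_zero_or_one k with h | h
    · exact Finset.disjoint_left.mp hd12 ((hparts k hk).1 h) hkV₂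
    · exact Finset.disjoint_left.mp hd23 hkV₂ ((hparts k hk).2 h)
  refine ⟨fun j => if j ≤ m then v j else z, fun j => if j < m then f j else e,
    ?_, ?_, ?_, ?_, ?_⟩
  · simp only [Nat.zero_le, if_pos]; exact h0
  · rw [hℓ]; simp only [if_neg (by omega : ¬ (m + 1 ≤ m))]; exact hzV
  · intro i j hij hjℓ
    by_cases hjm : j ≤ m
    · simp only [if_pos hjm, if_pos (by omega : i ≤ m)]
      exact hdist i j hij hjm
    · have hjm1 : j = m + 1 := by omega
      have him : i ≤ m := by omega
      simp only [if_pos him, if_neg (by omega : ¬ (j ≤ m))]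
      intro heq
      exact hnotV₂ i him (heq ▸ hzV)
  · intro i j hij hjℓ
    by_cases hjm : j < m
    · simp only [if_pos hjm, if_pos (by omega : i < m)]
      intro heq
      have h1 : v (j + 1) ∈ f j := (hedges j hjm).2.2
      have h2 : v (j + 1) ∉ f i :=
        hsep i (j + 1) (by omega) (by omega) (by omega) (by omega)
      exact h2 (heq ▸ h1)
    · have hjm1 : j = m := by omega
      have him : i < m := by omega
      simp only [if_pos him, if_neg (by omega : ¬ (j < m))]
      by_cases hi1 : i = m - 1
      · intro heq
        exact (hefm (by omega)) (by rw [← hi1]; exact heq.symm)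
      · intro heq
        have h1 : v m ∉ f i := hsep i m him le_rfl (by omega) (by omega)
        exact h1 (heq ▸ hvme)
  · intro i hiℓ
    by_cases him : i < m
    · simp only [if_pos him, if_pos (by omega : i ≤ m), if_pos (by omega : i + 1 ≤ m)]
      exact ⟨hE''E (hedges i him).1, (hedges i him).2.1, (hedges i him).2.2⟩
    · have hi1 : i = m := by omega
      simp only [if_neg (by omega : ¬ (i < m)), if_pos (by omega : i ≤ m),
        if_neg (by omega : ¬ (i + 1 ≤ m))]
      rw [hi1]
      exact ⟨heE, hvme, hze⟩
end

section
/- Let r ≥ 3 and let P be an r-uniform tight path of length m+1. Then P contains a Berge cycle of every length ℓ with 3 ≤ ℓ ≤ m. -/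
/-- `HasBergeCycle E ℓ`: the hypergraph with edge set `E` contains a Berge cycle
of length ℓ: ℓ distinct hyperedges e 0, ..., e (ℓ-1) and ℓ distinct vertices
v 0, ..., v (ℓ-1) with v i, v (i+1) ∈ e i (indices cyclic). -/
def HasBergeCycle {V : Type*} (E : Finset (Finset V)) (ℓ : ℕ) : Prop :=
  ∃ (e : ZMod ℓ → Finset V) (v : ZMod ℓ → V),
    Function.Injective e ∧ Function.Injective v ∧
    (∀ i, e i ∈ E) ∧ (∀ i, v i ∈ e i ∧ v (i + 1) ∈ e i)

/-- An r-uniform tight path of length m+1 (r ≥ 3) contains Berge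
cycles of every length ℓ with 3 ≤ ℓ ≤ m. -/
theorem stmt_7 {V : Type*} [DecidableEq V] (r m : ℕ) (hr : 3 ≤ r) (v : ℕ → V)
    (hinj : ∀ i j, i < m + r → j < m + r → v i = v j → i = j)
    (E : Finset (Finset V))
    (hE : E = (Finset.range (m + 1)).image (fun i => (Finset.Ico i (i + r)).image v)) :
    ∀ ℓ, 3 ≤ ℓ → ℓ ≤ m → HasBergeCycle E ℓ := by
  intro ℓ hl3 hlm
  haveI : NeZero ℓ := ⟨by omega⟩
  haveI : Fact (1 < ℓ) := ⟨by omega⟩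
  classical
  set idx : ℕ → ℕ := fun i => if 2*i+1 ≤ ℓ then 2*i+1 else 2*(ℓ-i) with hidx
  set eidx : ℕ → ℕ := fun i =>
    if 2*i+2 ≤ ℓ then 2*i+1 else if i = ℓ-1 then 0 else 2*(ℓ-i-1) with heidx
  have hidx_bound : ∀ i, i < ℓ → 1 ≤ idx i ∧ idx i ≤ ℓ := by
    intro i hi; simp only [hidx]; split_ifs <;> omega
  have hidx_inj : ∀ i j, i < ℓ → j < ℓ → idx i = idx j → i = j := by
    intro i j hi hj h; simp only [hidx] at h; split_ifs at h <;> omega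
  have heidx_bound : ∀ i, i < ℓ → eidx i ≤ ℓ - 1 := by
    intro i hi; simp only [heidx]; split_ifs <;> omega
  have heidx_inj : ∀ i j, i < ℓ → j < ℓ → eidx i = eidx j → i = j := by
    intro i j hi hj h; simp only [heidx] at h; split_ifs at h <;> omega
  have hpair : ∀ i, i < ℓ → (eidx i ≤ idx i ∧ idx i ≤ eidx i + 2) ∧
      (eidx i ≤ idx ((i+1) % ℓ) ∧ idx ((i+1) % ℓ) ≤ eidx i + 2) := by
    intro i hi
    have hmod : (i+1) % ℓ = if i + 1 = ℓ then 0 else i + 1 := by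
      split_ifs with h
      · rw [h, Nat.mod_self]
      · exact Nat.mod_eq_of_lt (by omega)
    rw [hmod]
    simp only [hidx, heidx]
    split_ifs <;> omega
  refine ⟨fun i => (Finset.Ico (eidx i.val) (eidx i.val + r)).image v,
          fun i => v (idx i.val), ?_, ?_, ?_, ?_⟩
  · -- edges injective
    intro i j hij
    have hi := ZMod.val_lt i
    have hj := ZMod.val_lt j
    have hbi := heidx_bound _ hi
    have hbj := heidx_bound _ hj
    replace hij : (Finset.Ico (eidx i.val) (eidx i.val + r)).image v
        = (Finset.Ico (eidx j.val) (eidx j.val + r)).image v := hij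
    have key : eidx i.val = eidx j.val := by
      have ha : v (eidx i.val) ∈ (Finset.Ico (eidx j.val) (eidx j.val + r)).image v := by
        rw [← hij]
        exact Finset.mem_image_of_mem v (Finset.mem_Ico.mpr ⟨le_refl _, by omega⟩)
      obtain ⟨k, hk, hvk⟩ := Finset.mem_image.mp ha
      rw [Finset.mem_Ico] at hk
      have h1 := hinj k (eidx i.val) (by omega) (by omega) hvk
      have hb : v (eidx j.val) ∈ (Finset.Ico (eidx i.val) (eidx i.val + r)).image v := by
        rw [hij]
        exact Finset.mem_image_of_mem v (Finset.mem_Ico.mpr ⟨le_refl _, by omega⟩)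
      obtain ⟨k', hk', hvk'⟩ := Finset.mem_image.mp hb
      rw [Finset.mem_Ico] at hk'
      have h2 := hinj k' (eidx j.val) (by omega) (by omega) hvk'
      omega
    exact ZMod.val_injective ℓ (heidx_inj _ _ hi hj key)
  · -- vertices injective
    intro i j hij
    have hi := ZMod.val_lt i
    have hj := ZMod.val_lt j
    have hbi := hidx_bound _ hi
    have hbj := hidx_bound _ hj
    have key := hinj (idx i.val) (idx j.val) (by omega) (by omega) hij
    exact ZMod.val_injective ℓ (hidx_inj _ _ hi hj key)
  · -- edges in E
    intro i
    have hi := ZMod.val_lt i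
    have hb := heidx_bound _ hi
    rw [hE]
    exact Finset.mem_image.mpr ⟨eidx i.val, Finset.mem_range.mpr (by omega), rfl⟩
  · -- incidences
    intro i
    have hi := ZMod.val_lt i
    have hp := hpair _ hi
    have hval : (i+1 : ZMod ℓ).val = (i.val + 1) % ℓ := by
      rw [ZMod.val_add, ZMod.val_one]
    constructor
    · exact Finset.mem_image_of_mem v (Finset.mem_Ico.mpr ⟨hp.1.1, by omega⟩)
    · show v (idx (i+1 : ZMod ℓ).val) ∈ (Finset.Ico (eidx i.val) (eidx i.val + r)).image v
      rw [hval]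
      exact Finset.mem_image_of_mem v (Finset.mem_Ico.mpr ⟨hp.2.1, by omega⟩)
end

section
/- Let r ≥ 3 and let H be an r-uniform hypergraph in which every (r−1)-subset of vertices that is contained in at least one edge is contained in at least k+1 edges. Then H contains a Berge cycle of every length ℓ with 3 ≤ ℓ ≤ k+2. -/
section Aux

variable {V : Type*} [Fintype V] [DecidableEq V]

/-- Any edge of an `r`-uniform hypergraph containing an `(r-1)`-set `T` equals `insert z T`. -/
lemma edge_structure {E : Finset (Finset V)} {r : ℕ} (hU : ∀ e ∈ E, e.card = r)
    {f T : Finset V} (hf : f ∈ E) (hT : T ⊆ f) (hTc : T.card = r - 1) (hr : 1 ≤ r) :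
    ∃ z, z ∉ T ∧ f = insert z T := by
  have hfc : f.card = r := hU f hf
  have h1 : (f \ T).card = 1 := by
    rw [Finset.card_sdiff_of_subset hT, hfc, hTc]; omega
  obtain ⟨z, hz⟩ := Finset.card_eq_one.mp h1
  refine ⟨z, ?_, ?_⟩
  · intro hzT
    have : z ∈ f \ T := by rw [hz]; exact Finset.mem_singleton_self z
    exact (Finset.mem_sdiff.mp this).2 hzT
  · have := Finset.sdiff_union_of_subset hT
    rw [hz] at this
    rw [← this]
    ext x
    simp [Finset.mem_union, Finset.mem_insert, or_comm]

/-- Find an edge extending `T` by a vertex outside the forbidden set `F`. -/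
lemma find_edge (E : Finset (Finset V)) (r k : ℕ) (hr : 3 ≤ r)
    (hU : ∀ e ∈ E, e.card = r)
    (hcodeg : ∀ S : Finset V, S.card = r - 1 → (∃ e ∈ E, S ⊆ e) →
      k + 1 ≤ (E.filter (fun e => S ⊆ e)).card)
    (T F : Finset V) (hTc : T.card = r - 1) (hex : ∃ f ∈ E, T ⊆ f)
    (hF : F.card ≤ k) :
    ∃ z, z ∉ T ∧ z ∉ F ∧ insert z T ∈ E := by
  have hbig := hcodeg T hTc hex
  set Bad : Finset (Finset V) := E.filter (fun f => T ⊆ f ∧ f ⊆ T ∪ F) with hBad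
  have hBadsub : Bad ⊆ F.image (fun u => insert u T) := by
    intro f hfB
    rw [hBad, Finset.mem_filter] at hfB
    obtain ⟨hfE, hTf, hfsub⟩ := hfB
    obtain ⟨z, hzT, hfz⟩ := edge_structure hU hfE hTf hTc (by omega)
    have hzF : z ∈ F := by
      have : z ∈ T ∪ F := hfsub (by rw [hfz]; exact Finset.mem_insert_self z T)
      rcases Finset.mem_union.mp this with h | h
      · exact absurd h hzT
      · exact h
    exact Finset.mem_image.mpr ⟨z, hzF, hfz.symm⟩
  have hBadcard : Bad.card ≤ k :=
    le_trans (Finset.card_le_card hBadsub) (le_trans Finset.card_image_le hF)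
  have : ∃ f ∈ E.filter (fun f => T ⊆ f), f ∉ Bad := by
    by_contra h
    push_neg at h
    have : E.filter (fun f => T ⊆ f) ⊆ Bad := fun f hf => h f hf
    have := Finset.card_le_card this
    omega
  obtain ⟨f, hf, hfB⟩ := this
  rw [Finset.mem_filter] at hf
  obtain ⟨hfE, hTf⟩ := hf
  have hnsub : ¬ f ⊆ T ∪ F := by
    intro hsub
    exact hfB (by rw [hBad, Finset.mem_filter]; exact ⟨hfE, hTf, hsub⟩)
  obtain ⟨z, hzT, hfz⟩ := edge_structure hU hfE hTf hTc (by omega)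
  obtain ⟨y, hyf, hyn⟩ := Finset.not_subset.mp hnsub
  have hyz : y = z := by
    rw [hfz] at hyf
    rcases Finset.mem_insert.mp hyf with h | h
    · exact h
    · exact absurd (Finset.mem_union_left F h) hyn
  subst hyz
  exact ⟨y, hzT, fun hyF => hyn (Finset.mem_union_right T hyF), by rw [← hfz]; exact hfE⟩

/-- Build a chain of vertices `w 0, w 1, ...` linked by edges containing `S.erase a`. -/
lemma chain_lemma (E : Finset (Finset V)) (r k : ℕ) (hr : 3 ≤ r)
    (hU : ∀ e ∈ E, e.card = r)
    (hcodeg : ∀ S : Finset V, S.card = r - 1 → (∃ e ∈ E, S ⊆ e) →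
      k + 1 ≤ (E.filter (fun e => S ⊆ e)).card)
    (S : Finset V) (hS : S.card = r - 1) (a : V) (ha : a ∈ S)
    (w0 : V) (hw0 : w0 ∉ S)
    (f0 : Finset V) (hf0 : f0 ∈ E) (hf0s : insert w0 (S.erase a) ⊆ f0) :
    ∀ n, n ≤ k → ∃ w : ℕ → V, w 0 = w0 ∧
      (∀ i, i ≤ n → w i ∉ S ∧ w i ≠ a) ∧
      (∀ i j, i ≤ n → j ≤ n → i ≠ j → w i ≠ w j) ∧
      (∀ i, i < n → insert (w i) (insert (w (i+1)) (S.erase a)) ∈ E) ∧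
      (∃ f ∈ E, insert (w n) (S.erase a) ⊆ f) := by
  have hea : (S.erase a).card = r - 2 := by
    rw [Finset.card_erase_of_mem ha, hS]
    omega
  intro n
  induction n with
  | zero =>
    intro _
    exact ⟨fun _ => w0, rfl, fun i hi => ⟨hw0, fun h => hw0 (by rw [← h] at ha; exact ha)⟩,
      fun i j hi hj hij => by omega, fun i hi => by omega, ⟨f0, hf0, hf0s⟩⟩
  | succ n ih =>
    intro hnk
    obtain ⟨w, hw0eq, hwS, hwinj, hwE, f, hfE, hfsub⟩ := ih (by omega)
    set T : Finset V := insert (w n) (S.erase a) with hT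
    have hwnS : w n ∉ S := (hwS n le_rfl).1
    have hTc : T.card = r - 1 := by
      rw [hT, Finset.card_insert_of_notMem (fun h => hwnS (Finset.mem_of_mem_erase h)), hea]
      omega
    set F : Finset V := insert a ((Finset.range n).image w) with hF
    have hFc : F.card ≤ k := by
      calc F.card ≤ ((Finset.range n).image w).card + 1 := Finset.card_insert_le _ _
        _ ≤ n + 1 := by
            have := Finset.card_image_le (s := Finset.range n) (f := w)
            simp only [Finset.card_range] at this
            omega
        _ ≤ k := hnk
    obtain ⟨z, hzT, hzF, hzE⟩ := find_edge E r k hr hU hcodeg T F hTc ⟨f, hfE, hfsub⟩ hFc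
    have hza : z ≠ a := fun h => hzF (h ▸ Finset.mem_insert_self a _)
    have hzS : z ∉ S := by
      intro hzSmem
      exact hzT (Finset.mem_insert_of_mem (Finset.mem_erase.mpr ⟨hza, hzSmem⟩))
    have hzw : ∀ j, j ≤ n → z ≠ w j := by
      intro j hj h
      rcases Nat.lt_or_ge j n with hlt | hge
      · exact hzF (Finset.mem_insert_of_mem (Finset.mem_image.mpr ⟨j, Finset.mem_range.mpr hlt, h.symm⟩))
      · have : j = n := by omega
        subst this
        exact hzT (h ▸ Finset.mem_insert_self _ _)
    refine ⟨Function.update w (n+1) z, ?_, ?_, ?_, ?_, ?_⟩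
    · rw [Function.update_of_ne (by omega)]; exact hw0eq
    · intro i hi
      rcases eq_or_ne i (n+1) with h | h
      · subst h; rw [Function.update_self]; exact ⟨hzS, hza⟩
      · rw [Function.update_of_ne h]; exact hwS i (by omega)
    · intro i j hi hj hij
      rcases eq_or_ne i (n+1) with h | h <;> rcases eq_or_ne j (n+1) with h' | h'
      · omega
      · subst h; rw [Function.update_self, Function.update_of_ne h']; exact hzw j (by omega)
      · subst h'; rw [Function.update_self, Function.update_of_ne h]
        exact fun hh => hzw i (by omega) hh.symm
      · rw [Function.update_of_ne h, Function.update_of_ne h']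
        exact hwinj i j (by omega) (by omega) hij
    · intro i hi
      rcases eq_or_ne i n with h | h
      · subst h
        rw [Function.update_of_ne (by omega), Function.update_self, Finset.insert_comm]
        exact hzE
      · rw [Function.update_of_ne (by omega : i ≠ n+1), Function.update_of_ne (by omega : i+1 ≠ n+1)]
        exact hwE i (by omega)
    · refine ⟨insert z T, hzE, ?_⟩
      rw [Function.update_self]
      intro x hx
      rcases Finset.mem_insert.mp hx with h | h
      · exact h ▸ Finset.mem_insert_self z T
      · exact Finset.mem_insert_of_mem (Finset.mem_insert_of_mem h)

end Aux

/-- If r ≥ 3 and H is a (nonempty) r-uniform hypergraph in which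
every (r−1)-subset of vertices contained in at least one edge is contained in at
least k+1 edges, then H contains a Berge cycle of every length ℓ with 3 ≤ ℓ ≤ k+2. -/
theorem stmt_8 {V : Type*} [Fintype V] [DecidableEq V] (r k : ℕ) (hr : 3 ≤ r)
    (E : Finset (Finset V)) (hU : ∀ e ∈ E, e.card = r) (hne : E.Nonempty)
    (hcodeg : ∀ S : Finset V, S.card = r - 1 → (∃ e ∈ E, S ⊆ e) →
      k + 1 ≤ (E.filter (fun e => S ⊆ e)).card) :
    ∀ ℓ, 3 ≤ ℓ → ℓ ≤ k + 2 → HasBergeCycle E ℓ := by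
  intro ℓ hl3 hlk
  have hk1 : 1 ≤ k := by omega
  -- pick a starting edge and an (r-1)-subset S of it
  obtain ⟨e₀, he₀⟩ := hne
  have he₀c : e₀.card = r := hU e₀ he₀
  obtain ⟨S, hSe₀, hS⟩ := Finset.exists_subset_card_eq (s := e₀) (n := r - 1) (by omega)
  have hS2 : 2 ≤ S.card := by omega
  have h1S : 1 < S.card := by omega
  obtain ⟨a, haS, b, hbS, hab⟩ := Finset.one_lt_card.mp h1S
  have hbS' : b ∈ S.erase a := Finset.mem_erase.mpr ⟨fun h => hab h.symm, hbS⟩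
  -- two distinct edges containing S
  have hbig := hcodeg S hS ⟨e₀, he₀, hSe₀⟩
  have h2 : 1 < (E.filter (fun e => S ⊆ e)).card := by omega
  obtain ⟨g1, hg1, g2, hg2, hg12⟩ := Finset.one_lt_card.mp h2
  rw [Finset.mem_filter] at hg1 hg2
  obtain ⟨w0, hw0T, hg1eq⟩ := edge_structure hU hg1.1 hg1.2 hS (by omega)
  obtain ⟨w0', hw0T', hg2eq⟩ := edge_structure hU hg2.1 hg2.2 hS (by omega)
  have hag1 : a ∈ g1 := hg1.2 haS
  have hag2 : a ∈ g2 := hg2.2 haS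
  -- build the chain
  obtain ⟨w, hwzero, hwS, hwinj, hwE, -⟩ :=
    chain_lemma E r k hr hU hcodeg S hS a haS w0 hw0T g1 hg1.1
      (by
        intro x hx
        rcases Finset.mem_insert.mp hx with h | h
        · rw [h, hg1eq]; exact Finset.mem_insert_self _ _
        · exact hg1.2 (Finset.mem_of_mem_erase h))
      (ℓ - 2) (by omega)
  -- assemble the cycle
  haveI : NeZero ℓ := ⟨by omega⟩
  set hfun : ℕ → Finset V := fun t => insert (w t) (insert (w (t+1)) (S.erase a)) with hhfun
  set Vf : ℕ → V := fun j => if j = 0 then a else if j = ℓ - 1 then b else w (j - 1) with hVf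
  set Ef : ℕ → Finset V := fun j => if j = 0 then g1 else if j = ℓ - 1 then g2 else hfun (j - 1)
    with hEf
  -- evaluation lemmas
  have hV0 : Vf 0 = a := by simp [hVf]
  have hVl : Vf (ℓ - 1) = b := by
    have h0 : ℓ - 1 ≠ 0 := by omega
    simp [hVf, h0]
  have hVm : ∀ j, 1 ≤ j → j ≤ ℓ - 2 → Vf j = w (j - 1) := by
    intro j hj1 hj2
    have h0 : j ≠ 0 := by omega
    have hl : j ≠ ℓ - 1 := by omega
    simp [hVf, h0, hl]
  have hE0 : Ef 0 = g1 := by simp [hEf]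
  have hEl : Ef (ℓ - 1) = g2 := by
    have h0 : ℓ - 1 ≠ 0 := by omega
    simp [hEf, h0]
  have hEm : ∀ j, 1 ≤ j → j ≤ ℓ - 2 → Ef j = hfun (j - 1) := by
    intro j hj1 hj2
    have h0 : j ≠ 0 := by omega
    have hl : j ≠ ℓ - 1 := by omega
    simp [hEf, h0, hl]
  have hfeq : ∀ t, hfun t = insert (w t) (insert (w (t+1)) (S.erase a)) := by
    intro t; rw [hhfun]
  -- membership facts about hfun
  have hwmem1 : ∀ t, w t ∈ hfun t := by
    intro t; rw [hfeq]; exact Finset.mem_insert_self _ _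
  have hwmem2 : ∀ t, w (t+1) ∈ hfun t := by
    intro t; rw [hfeq]; exact Finset.mem_insert_of_mem (Finset.mem_insert_self _ _)
  have hbmem : ∀ t, b ∈ hfun t := by
    intro t; rw [hfeq]
    exact Finset.mem_insert_of_mem (Finset.mem_insert_of_mem hbS')
  have hfunE : ∀ t, t < ℓ - 2 → hfun t ∈ E := by
    intro t ht; rw [hfeq]; exact hwE t ht
  have hmem : ∀ u t, u ∈ hfun t → u = w t ∨ u = w (t+1) ∨ u ∈ S.erase a := by
    intro u t hu
    rw [hfeq] at hu
    rcases Finset.mem_insert.mp hu with h | h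
    · exact Or.inl h
    · rcases Finset.mem_insert.mp h with h' | h'
      · exact Or.inr (Or.inl h')
      · exact Or.inr (Or.inr h')
  have hanh : ∀ t, t < ℓ - 2 → a ∉ hfun t := by
    intro t ht h
    rcases hmem a t h with h' | h' | h'
    · exact (hwS t (by omega)).2 h'.symm
    · exact (hwS (t+1) (by omega)).2 h'.symm
    · exact (Finset.mem_erase.mp h').1 rfl
  -- edge distinctness
  have hg1h : ∀ t, t < ℓ - 2 → g1 ≠ hfun t := by
    intro t ht h
    exact hanh t ht (h ▸ hag1)
  have hg2h : ∀ t, t < ℓ - 2 → g2 ≠ hfun t := by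
    intro t ht h
    exact hanh t ht (h ▸ hag2)
  have hhh : ∀ s t, s < t → t < ℓ - 2 → hfun s ≠ hfun t := by
    intro s t hst ht h
    have hin : w (t+1) ∈ hfun s := by rw [h]; exact hwmem2 t
    rcases hmem (w (t+1)) s hin with h' | h' | h'
    · exact hwinj (t+1) s (by omega) (by omega) (by omega) h'
    · exact hwinj (t+1) (s+1) (by omega) (by omega) (by omega) h'
    · exact (hwS (t+1) (by omega)).1 (Finset.mem_of_mem_erase h')
  -- injectivity on naturals
  have hEinj : ∀ x y, x < ℓ → y < ℓ → Ef x = Ef y → x = y := by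
    intro x y hx hy h
    by_cases hx0 : x = 0 <;> by_cases hy0 : y = 0
    · omega
    · by_cases hyl : y = ℓ - 1
      · rw [hx0, hE0, hyl, hEl] at h; exact absurd h hg12
      · rw [hx0, hE0, hEm y (by omega) (by omega)] at h
        exact absurd h (hg1h (y-1) (by omega))
    · by_cases hxl : x = ℓ - 1
      · rw [hy0, hE0, hxl, hEl] at h; exact absurd h.symm hg12
      · rw [hy0, hE0, hEm x (by omega) (by omega)] at h
        exact absurd h.symm (hg1h (x-1) (by omega))
    · by_cases hxl : x = ℓ - 1 <;> by_cases hyl : y = ℓ - 1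
      · omega
      · rw [hxl, hEl, hEm y (by omega) (by omega)] at h
        exact absurd h (hg2h (y-1) (by omega))
      · rw [hyl, hEl, hEm x (by omega) (by omega)] at h
        exact absurd h.symm (hg2h (x-1) (by omega))
      · rw [hEm x (by omega) (by omega), hEm y (by omega) (by omega)] at h
        rcases Nat.lt_trichotomy x y with hlt | heq | hgt
        · exact absurd h (hhh (x-1) (y-1) (by omega) (by omega))
        · exact heq
        · exact absurd h.symm (hhh (y-1) (x-1) (by omega) (by omega))
  have hVinj : ∀ x y, x < ℓ → y < ℓ → Vf x = Vf y → x = y := by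
    intro x y hx hy h
    by_cases hx0 : x = 0 <;> by_cases hy0 : y = 0
    · omega
    · by_cases hyl : y = ℓ - 1
      · rw [hx0, hV0, hyl, hVl] at h; exact absurd h hab
      · rw [hx0, hV0, hVm y (by omega) (by omega)] at h
        exact absurd h.symm (hwS (y-1) (by omega)).2
    · by_cases hxl : x = ℓ - 1
      · rw [hy0, hV0, hxl, hVl] at h; exact absurd h.symm hab
      · rw [hy0, hV0, hVm x (by omega) (by omega)] at h
        exact absurd h (hwS (x-1) (by omega)).2
    · by_cases hxl : x = ℓ - 1 <;> by_cases hyl : y = ℓ - 1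
      · omega
      · rw [hxl, hVl, hVm y (by omega) (by omega)] at h
        exact absurd (h ▸ hbS) (hwS (y-1) (by omega)).1
      · rw [hyl, hVl, hVm x (by omega) (by omega)] at h
        exact absurd (h.symm ▸ hbS) (hwS (x-1) (by omega)).1
      · rw [hVm x (by omega) (by omega), hVm y (by omega) (by omega)] at h
        by_contra hne'
        exact hwinj (x-1) (y-1) (by omega) (by omega) (by omega) h
  -- val of +1
  have h1v : (1 : ZMod ℓ).val = 1 := by
    rw [ZMod.val_one_eq_one_mod]
    exact Nat.mod_eq_of_lt (by omega)
  have hval1 : ∀ i : ZMod ℓ, (i + 1).val = (i.val + 1) % ℓ := by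
    intro i
    rw [ZMod.val_add, h1v]
  refine ⟨fun i => Ef i.val, fun i => Vf i.val, ?_, ?_, ?_, ?_⟩
  · intro i j hij
    exact ZMod.val_injective ℓ (hEinj i.val j.val (ZMod.val_lt i) (ZMod.val_lt j) hij)
  · intro i j hij
    exact ZMod.val_injective ℓ (hVinj i.val j.val (ZMod.val_lt i) (ZMod.val_lt j) hij)
  · intro i
    show Ef i.val ∈ E
    have hx : i.val < ℓ := ZMod.val_lt i
    by_cases h1 : i.val = 0
    · rw [h1, hE0]; exact hg1.1
    · by_cases h2 : i.val = ℓ - 1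
      · rw [h2, hEl]; exact hg2.1
      · rw [hEm i.val (by omega) (by omega)]
        exact hfunE (i.val - 1) (by omega)
  · intro i
    show Vf i.val ∈ Ef i.val ∧ Vf (i+1).val ∈ Ef i.val
    have hx : i.val < ℓ := ZMod.val_lt i
    by_cases h1 : i.val = 0
    · have hv1 : (i + 1).val = 1 := by
        rw [hval1, h1]; exact Nat.mod_eq_of_lt (by omega)
      constructor
      · rw [h1, hE0, hV0, hg1eq]; exact Finset.mem_insert_of_mem haS
      · rw [h1, hE0, hv1, hVm 1 le_rfl (by omega), hg1eq]
        simp only [Nat.sub_self]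
        rw [hwzero]
        exact Finset.mem_insert_self _ _
    · by_cases h2 : i.val = ℓ - 1
      · have hv1 : (i + 1).val = 0 := by
          rw [hval1, h2]
          have : ℓ - 1 + 1 = ℓ := by omega
          rw [this, Nat.mod_self]
        constructor
        · rw [h2, hEl, hVl, hg2eq]; exact Finset.mem_insert_of_mem hbS
        · rw [h2, hEl, hv1, hV0, hg2eq]; exact Finset.mem_insert_of_mem haS
      · have hv1 : (i + 1).val = i.val + 1 := by
          rw [hval1]; exact Nat.mod_eq_of_lt (by omega)
        constructor
        · rw [hEm i.val (by omega) (by omega), hVm i.val (by omega) (by omega)]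
          exact hwmem1 (i.val - 1)
        · rw [hEm i.val (by omega) (by omega), hv1]
          by_cases h3 : i.val + 1 = ℓ - 1
          · rw [h3, hVl]
            exact hbmem (i.val - 1)
          · rw [hVm (i.val + 1) (by omega) (by omega)]
            have : i.val + 1 - 1 = i.val - 1 + 1 := by omega
            rw [this]
            exact hwmem2 (i.val - 1)
end
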